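/- Let d_w > 0, d > 0, set d_s = 2d/d_w, and let α₁, α₂ ∈ (0, d_w) and ā₁, ā₂ > 0. Then there exists a constant C > 0 such that the following holds: for every t > 0, every probability measure η on (0,∞), and every function φ : (0,∞) → [0,∞) satisfying ∫_{(0,∞)} e^{−λu} dη(u) = e^{−tφ(λ)} for all λ > 0, φ(λ) ≥ ā₁·λ^{α₁/d_w} for λ ∈ (0,1], and φ(λ) ≥ ā₂·λ^{α₂/d_w} for λ ≥ 1, one has ∫_{(0,∞)} u^{−d_s/2} dη(u) ≤ C·(t^{−d/α₁} + t^{−d/α₂}). -/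

import Mathlib

open MeasureTheory

private lemma aux_int {q p b : ℝ} (hq : -1 < q) (hp : 0 < p) (hb : 0 < b) :
    MeasureTheory.IntegrableOn (fun x : ℝ => x ^ q * Real.exp (-b * x ^ p))
      (Set.Ioi 0) := by
  have hq' : -1 < (q + 1) / p - 1 := by
    have : 0 < (q + 1) / p := div_pos (by linarith) hp
    linarith
  have h1 : MeasureTheory.IntegrableOn
      (fun y : ℝ => y ^ ((q + 1) / p - 1) * Real.exp (-b * y)) (Set.Ioi 0) := by
    have h := integrableOn_rpow_mul_exp_neg_mul_rpow hq' zero_lt_one hb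
    exact h.congr_fun (fun x hx => by beta_reduce; rw [Real.rpow_one]) measurableSet_Ioi
  have h2 := (integrableOn_Ioi_comp_rpow_iff'
      (fun y : ℝ => y ^ ((q + 1) / p - 1) * Real.exp (-b * y)) hp.ne').mpr h1
  refine h2.congr_fun (fun x hx => ?_) measurableSet_Ioi
  have hx' : (0 : ℝ) < x := hx
  have e1 : (x ^ p) ^ ((q + 1) / p - 1) = x ^ (q + 1 - p) := by
    rw [← Real.rpow_mul hx'.le]
    congr 1
    field_simp
  simp only [smul_eq_mul]
  rw [e1, ← mul_assoc, ← Real.rpow_add hx', show p - 1 + (q + 1 - p) = q by ring]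

private lemma aux_lint {q p b : ℝ} (hq : -1 < q) (hp : 0 < p) (hb : 0 < b) :
    ∫⁻ x in Set.Ioi (0:ℝ), ENNReal.ofReal (x ^ q * Real.exp (-b * x ^ p))
      = ENNReal.ofReal (b ^ (-(q + 1) / p) * (1 / p) * Real.Gamma ((q + 1) / p)) := by
  rw [← MeasureTheory.ofReal_integral_eq_lintegral_ofReal (aux_int hq hp hb) ?_,
    integral_rpow_mul_exp_neg_mul_rpow hp hq hb]
  filter_upwards [ae_restrict_mem measurableSet_Ioi] with x hx
  have hx' : (0 : ℝ) < x := hx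
  positivity

private lemma aux_point {s u : ℝ} (hs : 0 < s) (hu : 0 < u) :
    ENNReal.ofReal (u ^ (-s)) * ENNReal.ofReal (Real.Gamma s)
      = ∫⁻ l in Set.Ioi (0:ℝ), ENNReal.ofReal (l ^ (s - 1) * Real.exp (-(u * l))) := by
  have hint : MeasureTheory.IntegrableOn
      (fun l : ℝ => l ^ (s - 1) * Real.exp (-(u * l))) (Set.Ioi 0) := by
    have h := integrableOn_rpow_mul_exp_neg_mul_rpow (by linarith : (-1:ℝ) < s - 1) zero_lt_one hu
    exact h.congr_fun (fun x hx => by beta_reduce; rw [Real.rpow_one, neg_mul]) measurableSet_Ioi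
  rw [← MeasureTheory.ofReal_integral_eq_lintegral_ofReal hint ?_,
    ← ENNReal.ofReal_mul (Real.rpow_nonneg hu.le _)]
  · congr 1
    rw [Real.integral_rpow_mul_exp_neg_mul_Ioi hs hu]
    congr 1
    rw [one_div, Real.inv_rpow hu.le, ← Real.rpow_neg hu.le]
  · filter_upwards [ae_restrict_mem measurableSet_Ioi] with x hx
    have hx' : (0:ℝ) < x := hx
    positivity

private lemma aux_inner {l t : ℝ} (hl : 0 < l) (η : Measure ℝ) [IsProbabilityMeasure η]
    (φ : ℝ → ℝ)
    (hLap : ∫ u in Set.Ioi (0:ℝ), Real.exp (-l * u) ∂η = Real.exp (-(t * φ l))) :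
    ∫⁻ u in Set.Ioi (0:ℝ), ENNReal.ofReal (Real.exp (-(u * l))) ∂η
      = ENNReal.ofReal (Real.exp (-(t * φ l))) := by
  have hexpint : MeasureTheory.IntegrableOn (fun u : ℝ => Real.exp (-(u * l)))
      (Set.Ioi 0) η := by
    refine Integrable.mono' (integrable_const 1)
      ((Real.continuous_exp.comp ((continuous_id.mul continuous_const).neg)).aestronglyMeasurable) ?_
    filter_upwards [ae_restrict_mem measurableSet_Ioi] with u hu
    have hu' : (0:ℝ) < u := hu
    rw [Real.norm_eq_abs, abs_of_pos (Real.exp_pos _)]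
    exact Real.exp_le_one_iff.mpr (by nlinarith)
  rw [← MeasureTheory.ofReal_integral_eq_lintegral_ofReal hexpint ?_]
  · congr 1
    rw [← hLap]
    refine setIntegral_congr_fun measurableSet_Ioi (fun u hu => ?_)
    rw [mul_comm u l, ← neg_mul]
  · filter_upwards [] with x using (Real.exp_pos _).le

/-- Lemma 4.1(b) of the paper: under the power lower bounds on the Laplace exponent `φ`,
the law `η` of the subordinator at time `t` satisfies
`∫ u^{-d_s/2} dη(u) ≤ C (t^{-d/α₁} + t^{-d/α₂})` with `d_s = 2d/d_w`. -/
theorem stmt_6 (d_w d ds α₁ α₂ a₁ a₂ : ℝ)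
    (hdw : 0 < d_w) (hd : 0 < d) (hds : ds = 2 * d / d_w)
    (hα₁ : 0 < α₁ ∧ α₁ < d_w) (hα₂ : 0 < α₂ ∧ α₂ < d_w)
    (ha₁ : 0 < a₁) (ha₂ : 0 < a₂) :
    ∃ C : ℝ, 0 < C ∧
      ∀ (t : ℝ), 0 < t →
      ∀ (η : Measure ℝ), IsProbabilityMeasure η → η (Set.Iic 0) = 0 →
      ∀ (φ : ℝ → ℝ), (∀ l : ℝ, 0 < l → 0 ≤ φ l) →
        (∀ l : ℝ, 0 < l →
          ∫ u in Set.Ioi (0:ℝ), Real.exp (-l * u) ∂η = Real.exp (-(t * φ l))) →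
        (∀ l : ℝ, 0 < l → l ≤ 1 → a₁ * l ^ (α₁ / d_w) ≤ φ l) →
        (∀ l : ℝ, 1 ≤ l → a₂ * l ^ (α₂ / d_w) ≤ φ l) →
        ∫⁻ u in Set.Ioi (0:ℝ), ENNReal.ofReal (u ^ (-(ds / 2))) ∂η
          ≤ ENNReal.ofReal (C * (t ^ (-(d / α₁)) + t ^ (-(d / α₂)))) := by
  obtain ⟨hα₁0, hα₁w⟩ := hα₁
  obtain ⟨hα₂0, hα₂w⟩ := hα₂
  set s : ℝ := d / d_w with hs_def
  have hs : 0 < s := div_pos hd hdw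
  have hβ₁ : 0 < α₁ / d_w := div_pos hα₁0 hdw
  have hβ₂ : 0 < α₂ / d_w := div_pos hα₂0 hdw
  have hd₁ : 0 < d / α₁ := div_pos hd hα₁0
  have hd₂ : 0 < d / α₂ := div_pos hd hα₂0
  have hΓs : 0 < Real.Gamma s := Real.Gamma_pos_of_pos hs
  set K₁ : ℝ := a₁ ^ (-(d / α₁)) * (1 / (α₁ / d_w) * Real.Gamma (d / α₁)) with hK₁_def
  set K₂ : ℝ := a₂ ^ (-(d / α₂)) * (1 / (α₂ / d_w) * Real.Gamma (d / α₂)) with hK₂_def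
  have hK₁ : 0 < K₁ := by
    have := Real.Gamma_pos_of_pos hd₁
    positivity
  have hK₂ : 0 < K₂ := by
    have := Real.Gamma_pos_of_pos hd₂
    positivity
  refine ⟨(K₁ + K₂) / Real.Gamma s, by positivity, ?_⟩
  intro t ht η hη hη0 φ hφ0 hLap hφ₁ hφ₂
  have hT₁ : (0:ℝ) < t ^ (-(d / α₁)) := Real.rpow_pos_of_pos ht _
  have hT₂ : (0:ℝ) < t ^ (-(d / α₂)) := Real.rpow_pos_of_pos ht _
  rw [show -(ds / 2) = -s by rw [hds, hs_def]; ring]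
  -- key identity
  have key : (∫⁻ u in Set.Ioi (0:ℝ), ENNReal.ofReal (u ^ (-s)) ∂η)
      * ENNReal.ofReal (Real.Gamma s)
      = ∫⁻ l in Set.Ioi (0:ℝ),
          ENNReal.ofReal (l ^ (s - 1)) * ENNReal.ofReal (Real.exp (-(t * φ l))) := by
    rw [← lintegral_mul_const' _ _ ENNReal.ofReal_ne_top]
    calc ∫⁻ u in Set.Ioi (0:ℝ),
          ENNReal.ofReal (u ^ (-s)) * ENNReal.ofReal (Real.Gamma s) ∂η
        = ∫⁻ u in Set.Ioi (0:ℝ),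
            (∫⁻ l in Set.Ioi (0:ℝ),
              ENNReal.ofReal (l ^ (s - 1) * Real.exp (-(u * l)))) ∂η := by
          refine setLIntegral_congr_fun measurableSet_Ioi ?_
          intro u hu
          exact aux_point hs hu
      _ = ∫⁻ l in Set.Ioi (0:ℝ),
            (∫⁻ u in Set.Ioi (0:ℝ),
              ENNReal.ofReal (l ^ (s - 1) * Real.exp (-(u * l))) ∂η) := by
          refine lintegral_lintegral_swap ?_
          apply Measurable.aemeasurable
          apply Measurable.ennreal_ofReal
          fun_prop
      _ = _ := by
          refine setLIntegral_congr_fun measurableSet_Ioi ?_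
          intro l hl
          have hl' : (0:ℝ) < l := hl
          simp_rw [ENNReal.ofReal_mul (Real.rpow_nonneg hl'.le _)]
          rw [lintegral_const_mul' _ _ ENNReal.ofReal_ne_top,
            aux_inner hl' η φ (hLap l hl')]
  -- bounds on the two pieces
  have hsplit : ∫⁻ l in Set.Ioi (0:ℝ),
        ENNReal.ofReal (l ^ (s - 1)) * ENNReal.ofReal (Real.exp (-(t * φ l)))
      = (∫⁻ l in Set.Ioc (0:ℝ) 1,
          ENNReal.ofReal (l ^ (s - 1)) * ENNReal.ofReal (Real.exp (-(t * φ l))))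
        + ∫⁻ l in Set.Ioi (1:ℝ),
            ENNReal.ofReal (l ^ (s - 1)) * ENNReal.ofReal (Real.exp (-(t * φ l))) := by
    rw [← lintegral_union measurableSet_Ioi Set.Ioc_disjoint_Ioi_same,
      Set.Ioc_union_Ioi_eq_Ioi zero_le_one]
  have hq1 : (s - 1 + 1) / (α₁ / d_w) = d / α₁ := by
    rw [hs_def]; field_simp; ring
  have hq2 : (s - 1 + 1) / (α₂ / d_w) = d / α₂ := by
    rw [hs_def]; field_simp; ring
  have hb1 : ∫⁻ l in Set.Ioc (0:ℝ) 1,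
        ENNReal.ofReal (l ^ (s - 1)) * ENNReal.ofReal (Real.exp (-(t * φ l)))
      ≤ ENNReal.ofReal (t ^ (-(d / α₁)) * K₁) := by
    calc ∫⁻ l in Set.Ioc (0:ℝ) 1,
          ENNReal.ofReal (l ^ (s - 1)) * ENNReal.ofReal (Real.exp (-(t * φ l)))
        ≤ ∫⁻ l in Set.Ioc (0:ℝ) 1,
            ENNReal.ofReal (l ^ (s - 1) * Real.exp (-(t * a₁) * l ^ (α₁ / d_w))) := by
          refine lintegral_mono_ae ?_
          filter_upwards [ae_restrict_mem measurableSet_Ioc] with l hl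
          rw [ENNReal.ofReal_mul (Real.rpow_nonneg hl.1.le _)]
          refine mul_le_mul_of_nonneg_left (ENNReal.ofReal_le_ofReal (Real.exp_le_exp.mpr ?_)) zero_le
          have h := mul_le_mul_of_nonneg_left (hφ₁ l hl.1 hl.2) ht.le
          nlinarith
      _ ≤ ∫⁻ l in Set.Ioi (0:ℝ),
            ENNReal.ofReal (l ^ (s - 1) * Real.exp (-(t * a₁) * l ^ (α₁ / d_w))) :=
          lintegral_mono_set Set.Ioc_subset_Ioi_self
      _ = ENNReal.ofReal ((t * a₁) ^ (-(s - 1 + 1) / (α₁ / d_w)) * (1 / (α₁ / d_w))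
            * Real.Gamma ((s - 1 + 1) / (α₁ / d_w))) :=
          aux_lint (by linarith) hβ₁ (by positivity)
      _ = ENNReal.ofReal (t ^ (-(d / α₁)) * K₁) := by
          congr 1
          rw [neg_div, hq1, Real.mul_rpow ht.le ha₁.le, hK₁_def]
          ring
  have hb2 : ∫⁻ l in Set.Ioi (1:ℝ),
        ENNReal.ofReal (l ^ (s - 1)) * ENNReal.ofReal (Real.exp (-(t * φ l)))
      ≤ ENNReal.ofReal (t ^ (-(d / α₂)) * K₂) := by
    calc ∫⁻ l in Set.Ioi (1:ℝ),
          ENNReal.ofReal (l ^ (s - 1)) * ENNReal.ofReal (Real.exp (-(t * φ l)))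
        ≤ ∫⁻ l in Set.Ioi (1:ℝ),
            ENNReal.ofReal (l ^ (s - 1) * Real.exp (-(t * a₂) * l ^ (α₂ / d_w))) := by
          refine lintegral_mono_ae ?_
          filter_upwards [ae_restrict_mem measurableSet_Ioi] with l hl
          have hl0 : (0:ℝ) < l := lt_trans zero_lt_one hl
          rw [ENNReal.ofReal_mul (Real.rpow_nonneg hl0.le _)]
          refine mul_le_mul_of_nonneg_left (ENNReal.ofReal_le_ofReal (Real.exp_le_exp.mpr ?_)) zero_le
          have h := mul_le_mul_of_nonneg_left (hφ₂ l hl.le) ht.le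
          nlinarith
      _ ≤ ∫⁻ l in Set.Ioi (0:ℝ),
            ENNReal.ofReal (l ^ (s - 1) * Real.exp (-(t * a₂) * l ^ (α₂ / d_w))) :=
          lintegral_mono_set (Set.Ioi_subset_Ioi zero_le_one)
      _ = ENNReal.ofReal ((t * a₂) ^ (-(s - 1 + 1) / (α₂ / d_w)) * (1 / (α₂ / d_w))
            * Real.Gamma ((s - 1 + 1) / (α₂ / d_w))) :=
          aux_lint (by linarith) hβ₂ (by positivity)
      _ = ENNReal.ofReal (t ^ (-(d / α₂)) * K₂) := by
          congr 1
          rw [neg_div, hq2, Real.mul_rpow ht.le ha₂.le, hK₂_def]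
          ring
  -- conclude
  have hfinal : (∫⁻ u in Set.Ioi (0:ℝ), ENNReal.ofReal (u ^ (-s)) ∂η)
      * ENNReal.ofReal (Real.Gamma s)
      ≤ ENNReal.ofReal ((K₁ + K₂) / Real.Gamma s
          * (t ^ (-(d / α₁)) + t ^ (-(d / α₂)))) * ENNReal.ofReal (Real.Gamma s) := by
    rw [key, hsplit, ← ENNReal.ofReal_mul (by positivity)]
    calc _ ≤ ENNReal.ofReal (t ^ (-(d / α₁)) * K₁) + ENNReal.ofReal (t ^ (-(d / α₂)) * K₂) :=
          add_le_add hb1 hb2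
      _ = ENNReal.ofReal (t ^ (-(d / α₁)) * K₁ + t ^ (-(d / α₂)) * K₂) := by
          rw [ENNReal.ofReal_add (by positivity) (by positivity)]
      _ ≤ _ := by
          refine ENNReal.ofReal_le_ofReal ?_
          rw [div_mul_eq_mul_div, div_mul_eq_mul_div, mul_div_assoc,
            div_self hΓs.ne', mul_one]
          nlinarith
  exact (ENNReal.mul_le_mul_iff_left (ENNReal.ofReal_pos.mpr hΓs).ne'
    ENNReal.ofReal_ne_top).mp hfinal
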